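/- Let δ ≥ 0 and let X be a geodesic metric space satisfying the 4δ-tripod condition. Let x, y, z ∈ X and let g₁ : [0, d(x,z)] → X be a geodesic with g₁(0) = x, g₁(d(x,z)) = z, and g₂ : [0, d(y,z)] → X a geodesic with g₂(0) = y, g₂(d(y,z)) = z. Then for every t with 0 ≤ t ≤ min{d(x,z), d(y,z)} one has d(g₁(t), g₂(t)) ≤ 3·d(x,y) + 8δ. -/

import Mathlib

open Filter MeasureTheory Set

/-- `g` restricted to `s ⊆ ℝ` is an isometric (geodesic) parametrization. -/
def IsGeodesicOn {X : Type*} [MetricSpace X] (g : ℝ → X) (s : Set ℝ) : Prop :=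
  ∀ u ∈ s, ∀ v ∈ s, dist (g u) (g v) = |u - v|

/-- A geodesic from `x` to `y`, parametrized by arclength on `[0, dist x y]`. -/
def GeodesicFromTo {X : Type*} [MetricSpace X] (g : ℝ → X) (x y : X) : Prop :=
  IsGeodesicOn g (Set.Icc 0 (dist x y)) ∧ g 0 = x ∧ g (dist x y) = y

/-- `X` is a geodesic metric space: every pair of points is joined by a geodesic. -/
def GeodesicSpace (X : Type*) [MetricSpace X] : Prop :=
  ∀ x y : X, ∃ g : ℝ → X, GeodesicFromTo g x y

/-- The Gromov product `(x|y)_p` of `x` and `y` with basepoint `p`. -/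
noncomputable def gromov {X : Type*} [MetricSpace X] (p x y : X) : ℝ :=
  (dist x p + dist y p - dist x y) / 2

/-- The `4δ`-tripod condition: two geodesics emanating from a common point `x` stay
within `4δ` of each other up to the Gromov product `(y|z)_x`. -/
def TripodCond (X : Type*) [MetricSpace X] (δ : ℝ) : Prop :=
  ∀ x y z : X, ∀ g g' : ℝ → X, GeodesicFromTo g x y → GeodesicFromTo g' x z →
    ∀ r : ℝ, 0 ≤ r → r ≤ gromov x y z → dist (g r) (g' r) ≤ 4 * δ

/-- Reversing a geodesic. -/
lemma rev_geo {X : Type*} [MetricSpace X] {g : ℝ → X} {x z : X}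
    (h : GeodesicFromTo g x z) :
    GeodesicFromTo (fun s => g (dist x z - s)) z x := by
  obtain ⟨hiso, h0, h1⟩ := h
  have hd : dist z x = dist x z := dist_comm z x
  refine ⟨?_, ?_, ?_⟩
  · intro u hu v hv
    rw [hd] at hu hv
    simp only
    rw [hiso _ ⟨by linarith [hu.2], by linarith [hu.1]⟩ _
        ⟨by linarith [hv.2], by linarith [hv.1]⟩,
      show dist x z - u - (dist x z - v) = -(u - v) by ring, abs_neg]
  · simpa using h1
  · rw [hd]; simpa using h0

/-- Theorem: two geodesics ending at a common point `z` fellow-travel with error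
`3·d(x,y) + 8δ`. -/
theorem statement5 {X : Type*} [MetricSpace X] (δ : ℝ) (hδ : 0 ≤ δ)
    (hgeo : GeodesicSpace X) (htri : TripodCond X δ)
    (x y z : X) (g₁ g₂ : ℝ → X)
    (hg₁ : GeodesicFromTo g₁ x z) (hg₂ : GeodesicFromTo g₂ y z)
    (t : ℝ) (ht0 : 0 ≤ t) (ht : t ≤ min (dist x z) (dist y z)) :
    dist (g₁ t) (g₂ t) ≤ 3 * dist x y + 8 * δ := by
  have ht1 : t ≤ dist x z := le_trans ht (min_le_left _ _)
  have ht2 : t ≤ dist y z := le_trans ht (min_le_right _ _)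
  set r₁ : ℝ := dist x z - t with hr₁
  set r₂ : ℝ := dist y z - t with hr₂
  have hr₁0 : 0 ≤ r₁ := by linarith
  have hr₂0 : 0 ≤ r₂ := by linarith
  have habs : |dist x z - dist y z| ≤ dist x y := abs_dist_sub_le x y z
  have habs1 : dist x z - dist y z ≤ dist x y := (abs_le.mp habs).2
  have habs2 : -(dist x y) ≤ dist x z - dist y z := (abs_le.mp habs).1
  have hG₁ := rev_geo hg₁
  have hG₂ := rev_geo hg₂
  by_cases hcase : min r₁ r₂ ≤ gromov z x y
  · set r : ℝ := min r₁ r₂ with hr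
    have hr0 : 0 ≤ r := le_min hr₁0 hr₂0
    have hrr₁ : r ≤ r₁ := min_le_left _ _
    have hrr₂ : r ≤ r₂ := min_le_right _ _
    have key := htri z x y _ _ hG₁ hG₂ r hr0 hcase
    have d1 : dist (g₁ t) (g₁ (dist x z - r)) = r₁ - r := by
      rw [hg₁.1 t ⟨ht0, ht1⟩ (dist x z - r) ⟨by linarith, by linarith⟩]
      rw [abs_of_nonpos (by linarith)]; ring_nf; linarith
    have d2 : dist (g₂ (dist y z - r)) (g₂ t) = r₂ - r := by
      rw [hg₂.1 (dist y z - r) ⟨by linarith, by linarith⟩ t ⟨ht0, ht2⟩]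
      rw [abs_of_nonneg (by linarith)]; linarith
    have hsum : (r₁ - r) + (r₂ - r) ≤ dist x y := by
      rcases le_total r₁ r₂ with h | h
      · have : r = r₁ := min_eq_left h
        rw [this]; simp only [hr₁, hr₂]; linarith
      · have : r = r₂ := min_eq_right h
        rw [this]; simp only [hr₁, hr₂]; linarith
    calc dist (g₁ t) (g₂ t)
        ≤ dist (g₁ t) (g₁ (dist x z - r)) + dist (g₁ (dist x z - r)) (g₂ (dist y z - r))
            + dist (g₂ (dist y z - r)) (g₂ t) := dist_triangle4 _ _ _ _
      _ ≤ (r₁ - r) + 4 * δ + (r₂ - r) := by rw [d1, d2]; linarith [key]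
      _ ≤ 3 * dist x y + 8 * δ := by nlinarith [dist_nonneg (x := x) (y := y)]
  · push_neg at hcase
    have hg : gromov z x y < r₁ := lt_of_lt_of_le hcase (min_le_left _ _)
    have hg' : gromov z x y < r₂ := lt_of_lt_of_le hcase (min_le_right _ _)
    -- unfold gromov z x y = (dist x z + dist y z - dist x y)/2
    have hgz : gromov z x y = (dist x z + dist y z - dist x y) / 2 := by
      simp [gromov]
    rw [hgz] at hg hg'
    obtain ⟨h, hh⟩ := hgeo x y
    have hh' := rev_geo hh
    have ht3 : t ≤ gromov x z y := by
      simp only [gromov, dist_comm z x, dist_comm y x, dist_comm z y]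
      simp only [hr₁] at hg; linarith
    have ht4 : t ≤ gromov y z x := by
      simp only [gromov, dist_comm z y, dist_comm z x]
      simp only [hr₂] at hg'; linarith
    have k1 := htri x z y _ _ hg₁ hh t ht0 ht3
    have k2 := htri y z x _ _ hg₂ hh' t ht0 ht4
    have htxy : t ≤ dist x y := by
      have : gromov x z y ≤ dist x y := by
        simp only [gromov, dist_comm z x, dist_comm y x, dist_comm z y]
        have := dist_triangle x z y
        have := dist_triangle z x y
        linarith [dist_triangle x y z, dist_comm y z, dist_comm x z]
      linarith
    have d3 : dist (h t) (h (dist x y - t)) = |t - (dist x y - t)| := by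
      exact hh.1 t ⟨ht0, htxy⟩ (dist x y - t) ⟨by linarith, by linarith⟩
    have d3' : dist (h t) (h (dist x y - t)) ≤ dist x y := by
      rw [d3]; rw [abs_le]; constructor <;> linarith
    calc dist (g₁ t) (g₂ t)
        ≤ dist (g₁ t) (h t) + dist (h t) (h (dist x y - t)) + dist (h (dist x y - t)) (g₂ t) := by
          have := dist_triangle4 (g₁ t) (h t) (h (dist x y - t)) (g₂ t)
          linarith
      _ ≤ 4 * δ + dist x y + 4 * δ := by
          have : dist (h (dist x y - t)) (g₂ t) = dist (g₂ t) (h (dist x y - t)) :=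
            dist_comm _ _
          rw [this]; exact add_le_add (add_le_add k1 d3') k2
      _ ≤ 3 * dist x y + 8 * δ := by nlinarith [dist_nonneg (x := x) (y := y)]
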